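/- In an orthomodular poset of finite height, with x → y := x' ∨ Max L(x, y) and the relation A ⊑ B on nonempty subsets defined by: there exist a ∈ A, b ∈ B with a ≤ b, one has: a ≤ b implies (c → a) ⊑ (c → b) for all c. -/

import Mathlib

/-- Common upper bounds of two elements. -/
def UB {P : Type*} [PartialOrder P] (a b : P) : Set P := {u | a ≤ u ∧ b ≤ u}

/-- Common lower bounds of two elements. -/
def LB {P : Type*} [PartialOrder P] (a b : P) : Set P := {l | l ≤ a ∧ l ≤ b}

/-- Minimal elements of the set of common upper bounds. -/
def MinU {P : Type*} [PartialOrder P] (a b : P) : Set P :=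
  {m | m ∈ UB a b ∧ ∀ x ∈ UB a b, x ≤ m → x = m}

/-- Maximal elements of the set of common lower bounds. -/
def MaxL {P : Type*} [PartialOrder P] (a b : P) : Set P :=
  {m | m ∈ LB a b ∧ ∀ x ∈ LB a b, m ≤ x → x = m}

/-- A poset has finite height if it contains no infinite chain. -/
def FinHeight (P : Type*) [Preorder P] : Prop :=
  ∀ C : Set P, IsChain (· ≤ ·) C → C.Finite

/-- x ⊙ y := Min U(x, y') ∧ y, elementwise (w is a witness of an existing meet). -/
def odot {P : Type*} [PartialOrder P] (c : P → P) (x y : P) : Set P :=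
  {w | ∃ m ∈ MinU x (c y), IsGLB {m, y} w}

/-- x → y := x' ∨ Max L(x, y), elementwise (w is a witness of an existing join). -/
def opImp {P : Type*} [PartialOrder P] (c : P → P) (x y : P) : Set P :=
  {w | ∃ m ∈ MaxL x y, IsLUB {c x, m} w}

/-- The order-like relation ⊑ on subsets. -/
def SubLE {P : Type*} [PartialOrder P] (A B : Set P) : Prop :=
  ∃ a ∈ A, ∃ b ∈ B, a ≤ b

/-- A ⊙ y := ⋃ x ∈ A, x ⊙ y. -/
def setOdot {P : Type*} [PartialOrder P] (c : P → P) (A : Set P) (y : P) : Set P :=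
  ⋃ x ∈ A, odot c x y

lemma exists_max_above {P : Type*} [PartialOrder P] (hfin : FinHeight P)
    (S : Set P) {x : P} (hx : x ∈ S) :
    ∃ m ∈ S, x ≤ m ∧ ∀ y ∈ S, m ≤ y → y = m := by
  have key : ∀ ch ⊆ S, IsChain (· ≤ ·) ch → ∀ y ∈ ch, ∃ ub ∈ S, ∀ z ∈ ch, z ≤ ub := by
    intro ch hchS hch y hy
    have hfinch : ch.Finite := hfin ch hch
    obtain ⟨t, htc, ht⟩ := Set.Finite.exists_maximalFor id ch hfinch ⟨y, hy⟩
    refine ⟨t, hchS htc, fun z hz => ?_⟩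
    rcases eq_or_ne z t with rfl | hne
    · exact le_rfl
    · rcases hch hz htc hne with h | h
      · exact h
      · exact ht hz h
  obtain ⟨m, hxm, hms, hmax⟩ := zorn_le_nonempty₀ S key x hx
  exact ⟨m, hms, hxm, fun z hz hmz => (hmax hz hmz).antisymm hmz⟩

theorem stmt8 {P : Type*} [PartialOrder P] [BoundedOrder P] (c : P → P)
    (hanti : ∀ x y : P, x ≤ y → c y ≤ c x)
    (hinv : ∀ x : P, c (c x) = x)
    (hinf : ∀ x : P, IsGLB {x, c x} ⊥)
    (hsup : ∀ x : P, IsLUB {x, c x} ⊤)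
    (hjoin : ∀ x y : P, x ≤ c y → ∃ j, IsLUB {x, y} j)
    (hOM : ∀ x y j : P, x ≤ y → IsLUB {c y, x} j → IsLUB {x, c j} y)
    (hfin : FinHeight P) :
    ∀ a b z : P, a ≤ b → SubLE (opImp c z a) (opImp c z b) := by
  intro a b z hab
  obtain ⟨m, hmLB, -, hmmax⟩ :=
    exists_max_above hfin (LB z a) (show (⊥ : P) ∈ LB z a from ⟨bot_le, bot_le⟩)
  have hmLBb : m ∈ LB z b := ⟨hmLB.1, hmLB.2.trans hab⟩
  obtain ⟨m', hm'LB, hmm', hm'max⟩ := exists_max_above hfin (LB z b) hmLBb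
  obtain ⟨j, hj⟩ := hjoin (c z) m (hanti m z hmLB.1)
  obtain ⟨j', hj'⟩ := hjoin (c z) m' (hanti m' z hm'LB.1)
  refine ⟨j, ⟨m, ⟨hmLB, hmmax⟩, hj⟩, j', ⟨m', ⟨hm'LB, hm'max⟩, hj'⟩, ?_⟩
  apply hj.2
  intro u hu
  rcases hu with rfl | hu
  · exact hj'.1 (Set.mem_insert _ _)
  · simp only [Set.mem_singleton_iff] at hu
    subst hu
    exact hmm'.trans (hj'.1 (Set.mem_insert_of_mem _ rfl))
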